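/- arXiv:math/9402206 — 2 statements merged into one kernel-verified Lean document; each statement's English description precedes it below -/
import Mathlib

section
/- Let H be a closed subalgebra of L_log containing the constants. If f ∈ H with f ∈ L¹ (i.e. f ∈ H₁), then e^f ∈ H. -/
open MeasureTheory ENNReal Filter

variable {α : Type*} [MeasurableSpace α]

/-- Membership in the Orlicz algebra `L_log`. -/
def LlogMem (μ : Measure α) (f : α → ℂ) : Prop :=
  AEMeasurable f μ ∧
    ∫⁻ x, ENNReal.ofReal (Real.log (1 + ‖f x‖)) ∂μ ≠ ⊤

/-- `H` is a closed subalgebra (containing the constants) of the topological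
algebra `L_log`, where closedness is with respect to the `F`-norm
`f ↦ ∫ log(1+|f|) dμ`. -/
structure IsClosedSubalgebraLlog (μ : Measure α) (H : Set (α → ℂ)) : Prop where
  subset_Llog : ∀ f ∈ H, LlogMem μ f
  const_mem : ∀ c : ℂ, (fun _ => c) ∈ H
  add_mem : ∀ f ∈ H, ∀ g ∈ H, f + g ∈ H
  mul_mem : ∀ f ∈ H, ∀ g ∈ H, f * g ∈ H
  smul_mem : ∀ (c : ℂ), ∀ f ∈ H, c • f ∈ H
  closed : ∀ (F : ℕ → α → ℂ) (f : α → ℂ), (∀ n, F n ∈ H) → LlogMem μ f →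
    Tendsto (fun n => ∫ x, Real.log (1 + ‖F n x - f x‖) ∂μ)
      atTop (nhds 0) → f ∈ H

open scoped Nat

lemma abs_exp_le (z : ℂ) : ‖Complex.exp z‖ ≤ Real.exp (‖z‖) := by
  rw [Complex.norm_exp]
  exact Real.exp_le_exp.2 ((le_abs_self _).trans (Complex.abs_re_le_norm z))

lemma abs_partial_le (z : ℂ) (N : ℕ) :
    ‖∑ n ∈ Finset.range N, z ^ n / (n ! : ℂ)‖ ≤ Real.exp (‖z‖) := by
  calc ‖∑ n ∈ Finset.range N, z ^ n / (n ! : ℂ)‖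
      ≤ ∑ n ∈ Finset.range N, ‖z ^ n / (n ! : ℂ)‖ := norm_sum_le _ _
    _ = ∑ n ∈ Finset.range N, (‖z‖) ^ n / (n ! : ℝ) := by
        refine Finset.sum_congr rfl fun n _ => ?_
        simp [map_div₀, map_pow, Complex.norm_natCast]
    _ ≤ Real.exp (‖z‖) := Real.sum_le_exp_of_nonneg (norm_nonneg z) N

lemma log_bound (z : ℂ) (N : ℕ) :
    Real.log (1 + ‖∑ n ∈ Finset.range N, z ^ n / (n ! : ℂ) - Complex.exp z‖)
      ≤ Real.log 3 + ‖z‖ := by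
  have h0 := norm_nonneg z
  have he : (1:ℝ) ≤ Real.exp (‖z‖) := Real.one_le_exp h0
  have h1 : ‖∑ n ∈ Finset.range N, z ^ n / (n ! : ℂ) - Complex.exp z‖
      ≤ 2 * Real.exp (‖z‖) := by
    calc ‖∑ n ∈ Finset.range N, z ^ n / (n ! : ℂ) - Complex.exp z‖
        ≤ ‖∑ n ∈ Finset.range N, z ^ n / (n ! : ℂ)‖ +
            ‖Complex.exp z‖ := norm_sub_le _ _
      _ ≤ 2 * Real.exp (‖z‖) := by
          have := abs_partial_le z N; have := abs_exp_le z; linarith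
  calc Real.log (1 + ‖∑ n ∈ Finset.range N, z ^ n / (n ! : ℂ) - Complex.exp z‖)
      ≤ Real.log (3 * Real.exp (‖z‖)) := by
        apply Real.log_le_log (by positivity)
        linarith
    _ = Real.log 3 + ‖z‖ := by
        rw [Real.log_mul (by norm_num) (Real.exp_ne_zero _), Real.log_exp]

/-- If `H` is a closed subalgebra of `L_log` containing the constants and
`f ∈ H ∩ L¹`, then `e^f ∈ H`. -/
theorem stmt10 (μ : Measure α) [IsProbabilityMeasure μ]
    (H : Set (α → ℂ)) (hH : IsClosedSubalgebraLlog μ H)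
    (f : α → ℂ) (hf : f ∈ H) (hf1 : Integrable f μ) :
    (fun x => Complex.exp (f x)) ∈ H := by
  obtain ⟨hfm, -⟩ := hH.subset_Llog f hf
  set F : ℕ → α → ℂ := fun N x => ∑ n ∈ Finset.range N, (f x) ^ n / (n ! : ℂ) with hFdef
  -- each partial sum is in H
  have hpow : ∀ n : ℕ, (fun x => (f x) ^ n) ∈ H := by
    intro n; induction n with
    | zero => simpa using hH.const_mem 1
    | succ n ih =>
        have h := hH.mul_mem _ ih _ hf
        have e : (fun x => (f x) ^ (n+1)) = (fun x => (f x) ^ n) * f := by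
          funext x; simp [pow_succ]
        rw [e]; exact h
  have hFH : ∀ N, F N ∈ H := by
    intro N; induction N with
    | zero => simpa [hFdef] using hH.const_mem 0
    | succ N ih =>
        have h2 := hH.smul_mem ((N ! : ℂ))⁻¹ _ (hpow N)
        have h := hH.add_mem _ ih _ h2
        have e : F (N+1) = F N + ((N ! : ℂ))⁻¹ • (fun x => (f x) ^ N) := by
          funext x
          simp only [hFdef, Finset.sum_range_succ, Pi.add_apply, Pi.smul_apply, smul_eq_mul]
          ring
        rw [e]; exact h
  -- exp ∘ f ∈ L_log
  have hexpm : AEMeasurable (fun x => Complex.exp (f x)) μ :=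
    Complex.measurable_exp.comp_aemeasurable hfm
  have hlog2 : (0:ℝ) ≤ Real.log 2 := Real.log_nonneg one_le_two
  have hfin : ∫⁻ x, ENNReal.ofReal (Real.log (1 + ‖Complex.exp (f x)‖)) ∂μ ≠ ⊤ := by
    have key : ∀ x, Real.log (1 + ‖Complex.exp (f x)‖)
        ≤ Real.log 2 + ‖f x‖ := by
      intro x
      have h1 : (1:ℝ) + ‖Complex.exp (f x)‖
          ≤ 2 * Real.exp (‖f x‖) := by
        have := abs_exp_le (f x)
        have := Real.one_le_exp (norm_nonneg (f x))
        linarith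
      calc Real.log (1 + ‖Complex.exp (f x)‖)
          ≤ Real.log (2 * Real.exp (‖f x‖)) :=
            Real.log_le_log (by positivity) h1
        _ = Real.log 2 + ‖f x‖ := by
            rw [Real.log_mul (by norm_num) (Real.exp_ne_zero _), Real.log_exp]
    have hb : ∀ x, ENNReal.ofReal (Real.log (1 + ‖Complex.exp (f x)‖))
        ≤ ENNReal.ofReal (Real.log 2) + ENNReal.ofReal (‖f x‖) := by
      intro x
      calc ENNReal.ofReal (Real.log (1 + ‖Complex.exp (f x)‖))
          ≤ ENNReal.ofReal (Real.log 2 + ‖f x‖) :=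
            ENNReal.ofReal_le_ofReal (key x)
        _ = _ := ENNReal.ofReal_add hlog2 (norm_nonneg _)
    have hlt : ∫⁻ x, (ENNReal.ofReal (Real.log 2) + ENNReal.ofReal (‖f x‖)) ∂μ < ⊤ := by
      rw [lintegral_add_left measurable_const, lintegral_const]
      have h2 : ∫⁻ x, ENNReal.ofReal (‖f x‖) ∂μ < ⊤ := by
        have := hf1.hasFiniteIntegral
        rw [hasFiniteIntegral_iff_norm] at this
        simpa using this
      exact ENNReal.add_lt_top.2 ⟨ENNReal.mul_lt_top ofReal_lt_top (measure_lt_top μ _), h2⟩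
    exact ((lintegral_mono hb).trans_lt hlt).ne
  -- apply closedness with dominated convergence
  refine hH.closed F _ hFH ⟨hexpm, hfin⟩ ?_
  have hbound : Integrable (fun x => Real.log 3 + ‖f x‖) μ := by
    refine (integrable_const _).add ?_
    simpa using hf1.norm
  have hmeas : ∀ n, AEStronglyMeasurable
      (fun x => Real.log (1 + ‖F n x - Complex.exp (f x)‖)) μ := by
    intro n
    have hin : Continuous (fun z : ℂ =>
        1 + ‖∑ k ∈ Finset.range n, z ^ k / (k ! : ℂ) - Complex.exp z‖) :=
      continuous_const.add (continuous_norm.comp (by continuity))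
    have hcont := hin.log (fun z => by positivity)
    exact (hcont.measurable.comp_aemeasurable hfm).aestronglyMeasurable
  have h_bound : ∀ n, ∀ᵐ x ∂μ,
      ‖Real.log (1 + ‖F n x - Complex.exp (f x)‖)‖ ≤ Real.log 3 + ‖f x‖ := by
    intro n
    filter_upwards with x
    rw [Real.norm_eq_abs, abs_of_nonneg (Real.log_nonneg (le_add_of_nonneg_right (norm_nonneg _)))]
    exact log_bound (f x) n
  have h_lim : ∀ᵐ x ∂μ, Tendsto (fun n => Real.log (1 + ‖F n x - Complex.exp (f x)‖))
      atTop (nhds ((fun _ : α => (0:ℝ)) x)) := by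
    filter_upwards with x
    have hs : HasSum (fun n => (f x) ^ n / (n ! : ℂ)) (Complex.exp (f x)) := by
      rw [Complex.exp_eq_exp_ℂ]
      exact NormedSpace.expSeries_div_hasSum_exp (f x)
    have h1 : Tendsto (fun n => F n x) atTop (nhds (Complex.exp (f x))) :=
      hs.tendsto_sum_nat
    have hc : Continuous (fun z : ℂ => Real.log (1 + ‖z - Complex.exp (f x)‖)) := by
      have hin : Continuous (fun z : ℂ => 1 + ‖z - Complex.exp (f x)‖) :=
        continuous_const.add (continuous_norm.comp (by continuity))
      exact hin.log (fun z => by positivity)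
    have := (hc.tendsto (Complex.exp (f x))).comp h1
    simpa [Function.comp_def] using this
  have := tendsto_integral_of_dominated_convergence _ hmeas hbound h_bound h_lim
  simpa using this
end

section
/- Let H₁ ⊂ L¹(μ) be a subspace that is closed in L_log (e.g. the L¹-part of a closed subalgebra H of L_log), and define for w ∈ L¹ real-valued: ‖w‖_{BMO} = inf{‖w − h‖_∞ : h ∈ H₁}. If w ∈ BMO (i.e. this infimum is finite), then the infimum is attained: there exists g ∈ H₁ with ‖w − g‖_∞ = ‖w‖_{BMO}. -/
open MeasureTheory ENNReal Filter

variable {α : Type*} [MeasurableSpace α]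

/-- The BMO-norm `‖w‖_{BMO} = inf {‖w − h‖_∞ : h ∈ H₁}` (as a value in `ℝ≥0∞`). -/
noncomputable def bmoNorm (μ : Measure α) (H₁ : Set (α → ℂ)) (w : α → ℝ) : ℝ≥0∞ :=
  ⨅ (h : α → ℂ) (_ : h ∈ H₁), eLpNorm (fun x => (w x : ℂ) - h x) ⊤ μ

section Aux

variable {μ : Measure α}

lemma log_one_add_le (t : ℝ) (ht : 0 ≤ t) : Real.log (1 + t) ≤ t := by
  have := Real.log_le_sub_one_of_pos (x := 1 + t) (by linarith)
  linarith

lemma logint_integrable {d : α → ℂ} (hd : Integrable d μ) :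
    Integrable (fun x => Real.log (1 + ‖d x‖)) μ := by
  refine Integrable.mono hd.norm ?_ ?_
  · exact (Real.measurable_log.comp_aemeasurable
      ((aemeasurable_const (b := (1:ℝ))).add hd.aemeasurable.norm)).aestronglyMeasurable
  · filter_upwards with x
    have h0 : 0 ≤ Real.log (1 + ‖d x‖) :=
      Real.log_nonneg (by linarith [norm_nonneg (d x)])
    rw [Real.norm_eq_abs, abs_of_nonneg h0, Real.norm_eq_abs, abs_of_nonneg (norm_nonneg _)]
    exact log_one_add_le _ (norm_nonneg _)

lemma logint_nonneg (d : α → ℂ) : 0 ≤ ∫ x, Real.log (1 + ‖d x‖) ∂μ := by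
  refine integral_nonneg fun x => Real.log_nonneg (by linarith [norm_nonneg (d x)])

lemma logint_le {d : α → ℂ} (hd : Integrable d μ) :
    ∫ x, Real.log (1 + ‖d x‖) ∂μ ≤ (eLpNorm d 1 μ).toReal := by
  have h1 : ∫ x, Real.log (1 + ‖d x‖) ∂μ ≤ ∫ x, ‖d x‖ ∂μ := by
    refine integral_mono (logint_integrable hd) hd.norm ?_
    intro x; exact log_one_add_le _ (norm_nonneg _)
  have h2 : ∫ x, ‖d x‖ ∂μ = (eLpNorm d 1 μ).toReal := by
    rw [integral_norm_eq_lintegral_enorm hd.aestronglyMeasurable,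
      eLpNorm_one_eq_lintegral_enorm]
  linarith

lemma llogMem_of_integrable {f : α → ℂ} (hf : Integrable f μ) : LlogMem μ f := by
  refine ⟨hf.aemeasurable, ?_⟩
  have : ∫⁻ x, ENNReal.ofReal (Real.log (1 + ‖f x‖)) ∂μ
      ≤ ∫⁻ x, (‖f x‖₊ : ℝ≥0∞) ∂μ := by
    refine lintegral_mono fun x => ?_
    rw [← enorm_eq_nnnorm, ← ofReal_norm]
    exact ENNReal.ofReal_le_ofReal (log_one_add_le _ (norm_nonneg _))
  exact ne_top_of_le_ne_top hf.2.ne this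

lemma ae_bound_of_top {f : α → ℂ} {C : ℝ≥0∞} (h : eLpNorm f ⊤ μ ≤ C) :
    ∀ᵐ x ∂μ, (‖f x‖₊ : ℝ≥0∞) ≤ C := by
  rw [eLpNorm_exponent_top, eLpNormEssSup] at h
  exact (ae_le_essSup _).mono fun x hx => le_trans hx h

lemma top_bound_of_ae {f : α → ℂ} {C : ℝ≥0∞} (h : ∀ᵐ x ∂μ, (‖f x‖₊ : ℝ≥0∞) ≤ C) :
    eLpNorm f ⊤ μ ≤ C := by
  rw [eLpNorm_exponent_top, eLpNormEssSup]
  exact essSup_le_of_ae_le _ h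

lemma nnnorm_half : ((‖(1/2 : ℂ)‖₊ : NNReal) : ℝ≥0∞) = 2⁻¹ := by
  have : ‖(2:ℂ)‖₊ = 2 := by ext; simp
  rw [nnnorm_div, nnnorm_one, this, ENNReal.coe_div two_ne_zero]
  simp [one_div]

lemma midpoint_bound {w : α → ℝ} {h h' : α → ℂ} {C : ℝ≥0∞}
    (hb : eLpNorm (fun x => (w x : ℂ) - h x) ⊤ μ ≤ C)
    (hb' : eLpNorm (fun x => (w x : ℂ) - h' x) ⊤ μ ≤ C) :
    eLpNorm (fun x => (w x : ℂ) - ((1/2 : ℂ) • (h + h')) x) ⊤ μ ≤ C := by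
  refine top_bound_of_ae ?_
  filter_upwards [ae_bound_of_top hb, ae_bound_of_top hb'] with x hx hx'
  have heq : (w x : ℂ) - ((1/2 : ℂ) • (h + h')) x
      = (1/2 : ℂ) • (((w x : ℂ) - h x) + ((w x : ℂ) - h' x)) := by
    simp only [Pi.smul_apply, Pi.add_apply, smul_eq_mul]
    ring
  rw [heq]
  have : (‖(1/2 : ℂ) • (((w x : ℂ) - h x) + ((w x : ℂ) - h' x))‖₊ : ℝ≥0∞)
      ≤ 2⁻¹ * ((‖(w x : ℂ) - h x‖₊ : ℝ≥0∞) + (‖(w x : ℂ) - h' x‖₊ : ℝ≥0∞)) := by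
    rw [nnnorm_smul]
    push_cast
    rw [nnnorm_half]
    exact mul_le_mul_right (by exact_mod_cast nnnorm_add_le _ _) _
  refine this.trans ?_
  calc 2⁻¹ * ((‖(w x : ℂ) - h x‖₊ : ℝ≥0∞) + (‖(w x : ℂ) - h' x‖₊ : ℝ≥0∞))
      ≤ 2⁻¹ * (C + C) := by gcongr
    _ = C := by
        rw [← two_mul, ← mul_assoc, ENNReal.inv_mul_cancel two_ne_zero ofNat_ne_top, one_mul]

lemma diff_ae_bound {w : α → ℝ} {h h' : α → ℂ} {C : ℝ≥0∞}
    (hb : eLpNorm (fun x => (w x : ℂ) - h x) ⊤ μ ≤ C)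
    (hb' : eLpNorm (fun x => (w x : ℂ) - h' x) ⊤ μ ≤ C) :
    ∀ᵐ x ∂μ, (‖h x - h' x‖₊ : ℝ≥0∞) ≤ C + C := by
  filter_upwards [ae_bound_of_top hb, ae_bound_of_top hb'] with x h1 h2
  have heq : h x - h' x = ((w x : ℂ) - h' x) - ((w x : ℂ) - h x) := by ring
  rw [heq]
  calc (‖((w x : ℂ) - h' x) - ((w x : ℂ) - h x)‖₊ : ℝ≥0∞)
      ≤ (‖(w x : ℂ) - h' x‖₊ : ℝ≥0∞) + (‖(w x : ℂ) - h x‖₊ : ℝ≥0∞) := by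
        exact_mod_cast nnnorm_sub_le _ _
    _ ≤ C + C := add_le_add h2 h1

lemma diff_memLp2 [IsProbabilityMeasure μ] {w : α → ℝ} {h h' : α → ℂ} {C : ℝ≥0∞} (hC : C ≠ ⊤)
    (hm : AEStronglyMeasurable h μ) (hm' : AEStronglyMeasurable h' μ)
    (hb : eLpNorm (fun x => (w x : ℂ) - h x) ⊤ μ ≤ C)
    (hb' : eLpNorm (fun x => (w x : ℂ) - h' x) ⊤ μ ≤ C) :
    MemLp (fun x => h x - h' x) 2 μ := by
  refine ⟨hm.sub hm', ?_⟩
  have htop : eLpNorm (fun x => h x - h' x) ⊤ μ ≤ C + C :=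
    top_bound_of_ae (diff_ae_bound hb hb')
  have h2 : eLpNorm (fun x => h x - h' x) 2 μ ≤ C + C :=
    (eLpNorm_le_eLpNorm_of_exponent_le le_top (hm.sub hm')).trans htop
  exact lt_of_le_of_lt h2 (by finiteness)

lemma norm2_le {f : α → ℂ} {C : ℝ≥0∞} [IsProbabilityMeasure μ]
    (hm : AEStronglyMeasurable f μ) (h : eLpNorm f ⊤ μ ≤ C) :
    eLpNorm f 2 μ ≤ C :=
  (eLpNorm_le_eLpNorm_of_exponent_le le_top hm).trans h

end Aux

set_option maxHeartbeats 1000000 in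
/-- If `H₁ ⊂ L¹` is a subspace closed in `L_log` and `w ∈ L¹` is real-valued with
finite BMO-norm, then the infimum defining `‖w‖_{BMO}` is attained. -/
theorem stmt12 (μ : Measure α) [IsProbabilityMeasure μ]
    (H₁ : Set (α → ℂ))
    (hL1 : ∀ f ∈ H₁, Integrable f μ)
    (hadd : ∀ f ∈ H₁, ∀ g ∈ H₁, f + g ∈ H₁)
    (hsmul : ∀ (c : ℂ), ∀ f ∈ H₁, c • f ∈ H₁)
    -- `H₁` is closed in the topology of `L_log`
    (hclosed : ∀ (F : ℕ → α → ℂ) (f : α → ℂ), (∀ n, F n ∈ H₁) → LlogMem μ f →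
      Integrable f μ →
      Tendsto (fun n => ∫ x, Real.log (1 + ‖F n x - f x‖) ∂μ)
        atTop (nhds 0) → f ∈ H₁)
    (w : α → ℝ) (hw : Integrable w μ)
    (hbmo : bmoNorm μ H₁ w ≠ ⊤) :
    ∃ g ∈ H₁, eLpNorm (fun x => (w x : ℂ) - g x) ⊤ μ = bmoNorm μ H₁ w := by
  classical
  set B := bmoNorm μ H₁ w with hBdef
  have heps_ne : ∀ n : ℕ, (1 : ℝ≥0∞)/(n+1) ≠ 0 :=
    fun n => (ENNReal.div_pos one_ne_zero (ENNReal.add_ne_top.2 ⟨ENNReal.natCast_ne_top n, one_ne_top⟩)).ne'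
  have heps_le_one : ∀ n : ℕ, (1 : ℝ≥0∞)/(n+1) ≤ 1 := by
    intro n
    refine ENNReal.div_le_of_le_mul ?_
    rw [one_mul]
    exact le_add_self
  -- minimizing sequence
  have hex : ∀ n : ℕ, ∃ h', h' ∈ H₁ ∧
      eLpNorm (fun x => (w x : ℂ) - h' x) ⊤ μ ≤ B + 1/(n+1) := by
    intro n
    have hlt : bmoNorm μ H₁ w < B + 1/(n+1) := ENNReal.lt_add_right hbmo (heps_ne n)
    rw [bmoNorm, iInf_lt_iff] at hlt
    obtain ⟨h', hlt⟩ := hlt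
    rw [iInf_lt_iff] at hlt
    obtain ⟨hm, hlt⟩ := hlt
    exact ⟨h', hm, hlt.le⟩
  choose h0seq h0mem h0bound using hex
  have hmeas : ∀ f ∈ H₁, AEStronglyMeasurable f μ := fun f hf => (hL1 f hf).aestronglyMeasurable
  have hb1 : ∀ n, eLpNorm (fun x => (w x : ℂ) - h0seq n x) ⊤ μ ≤ B + 1 :=
    fun n => (h0bound n).trans (add_le_add_right (heps_le_one n) _)
  have hB1ne : (B + 1 : ℝ≥0∞) ≠ ⊤ := ENNReal.add_ne_top.2 ⟨hbmo, one_ne_top⟩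
  -- the elements `u n = h0seq n - h0seq 0` of `L²`
  have humem : ∀ n, MemLp (fun x => h0seq n x - h0seq 0 x) 2 μ := fun n =>
    diff_memLp2 hB1ne (hmeas _ (h0mem n)) (hmeas _ (h0mem 0)) (hb1 n) (hb1 0)
  set u : ℕ → Lp ℂ 2 μ := fun n => (humem n).toLp _ with hu
  -- the sets `S n`
  set S : ℕ → Set (Lp ℂ 2 μ) := fun n => {q | ∃ h', h' ∈ H₁ ∧
      eLpNorm (fun x => (w x : ℂ) - h' x) ⊤ μ ≤ B + 1/(n+1) ∧
      (q : α → ℂ) =ᵐ[μ] fun x => h' x - h0seq 0 x} with hS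
  have huS : ∀ n, u n ∈ S n := fun n =>
    ⟨h0seq n, h0mem n, h0bound n, MemLp.coeFn_toLp _⟩
  have hSne : ∀ n, (S n).Nonempty := fun n => ⟨u n, huS n⟩
  have hSsub : ∀ m n, n ≤ m → S m ⊆ S n := by
    intro m n hnm q hq
    obtain ⟨h', hmem, hbd, hae⟩ := hq
    refine ⟨h', hmem, hbd.trans (add_le_add_right ?_ _), hae⟩
    exact ENNReal.div_le_div_left (by exact_mod_cast Nat.succ_le_succ hnm) 1
  -- midpoints stay in `S n`
  have hmidS : ∀ n, ∀ q ∈ S n, ∀ q' ∈ S n, (1/2 : ℂ) • (q + q') ∈ S n := by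
    intro n q hq q' hq'
    obtain ⟨h', hmem, hbd, hae⟩ := hq
    obtain ⟨h'', hmem', hbd', hae'⟩ := hq'
    refine ⟨(1/2 : ℂ) • (h' + h''), hsmul _ _ (hadd _ hmem _ hmem'),
      midpoint_bound hbd hbd', ?_⟩
    filter_upwards [Lp.coeFn_smul (1/2 : ℂ) (q + q'), Lp.coeFn_add q q', hae, hae']
      with x hx1 hx2 hx3 hx4
    rw [hx1, Pi.smul_apply, hx2, Pi.add_apply, hx3, hx4]
    simp only [Pi.smul_apply, Pi.add_apply, smul_eq_mul]
    ring
  -- infima of norms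
  have hbdd : ∀ n, BddBelow (norm '' S n) := by
    intro n
    exact ⟨0, fun r ⟨p, _, hp⟩ => hp ▸ norm_nonneg p⟩
  set d : ℕ → ℝ := fun n => sInf (norm '' S n) with hd
  have hd_mono : Monotone d := by
    intro n m hnm
    exact csInf_le_csInf (hbdd n) ((hSne m).image _) (Set.image_mono (hSsub m n hnm))
  set R : ℝ := (((B+1) + (B+1) : ℝ≥0∞)).toReal with hR
  have huR : ∀ n, ‖u n‖ ≤ R := by
    intro n
    rw [hu, Lp.norm_toLp]
    refine ENNReal.toReal_mono (ENNReal.add_ne_top.2 ⟨hB1ne, hB1ne⟩) ?_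
    exact norm2_le ((hmeas _ (h0mem n)).sub (hmeas _ (h0mem 0)))
      (top_bound_of_ae (diff_ae_bound (hb1 n) (hb1 0)))
  have hd_ub : ∀ n, d n ≤ R := by
    intro n
    exact le_trans (csInf_le (hbdd n) ⟨u n, huS n, rfl⟩) (huR n)
  have hd_bddAbove : BddAbove (Set.range d) := by
    refine ⟨R, ?_⟩
    rintro r ⟨n, rfl⟩
    exact hd_ub n
  set δ : ℝ := ⨆ n, d n with hδdef
  have hdδ : ∀ n, d n ≤ δ := fun n => le_ciSup hd_bddAbove n
  have hδtend : Tendsto d atTop (nhds δ) := tendsto_atTop_ciSup hd_mono hd_bddAbove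
  -- near-minimizers
  have hqex : ∀ n : ℕ, ∃ q ∈ S n, ‖q‖ < d n + 1/(n+1) := by
    intro n
    have : d n < d n + 1/(n+1) := by
      have : (0:ℝ) < 1/(n+1) := by positivity
      linarith
    obtain ⟨r, ⟨p, hpS, rfl⟩, hr⟩ := exists_lt_of_csInf_lt ((hSne n).image _) this
    exact ⟨p, hpS, hr⟩
  choose q hqS hqn using hqex
  -- the Cauchy estimate
  set b : ℕ → ℝ := fun N => Real.sqrt (max 0 (4*(δ + 1/(N+1))^2 - 4 * d N ^ 2)) with hb
  have hkey : ∀ (n m N : ℕ), N ≤ n → N ≤ m → dist (q n) (q m) ≤ b N := by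
    intro n m N hn hm
    have hmid : (1/2 : ℂ) • (q n + q m) ∈ S N :=
      hmidS N (q n) (hSsub n N hn (hqS n)) (q m) (hSsub m N hm (hqS m))
    have h1 : d N ≤ ‖(1/2 : ℂ) • (q n + q m)‖ := csInf_le (hbdd N) ⟨_, hmid, rfl⟩
    have hnorm : ‖(1/2 : ℂ) • (q n + q m)‖ = (1/2) * ‖q n + q m‖ := by
      rw [norm_smul]
      norm_num
    have hpar := parallelogram_law_with_norm ℂ (q n) (q m)
    have hqnb : ‖q n‖ ≤ δ + 1/(N+1) := by
      have h2 : (1:ℝ)/(n+1) ≤ 1/(N+1) :=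
        one_div_le_one_div_of_le (by positivity) (by exact_mod_cast Nat.succ_le_succ hn)
      have := (hqn n).le
      have := hdδ n
      linarith
    have hqmb : ‖q m‖ ≤ δ + 1/(N+1) := by
      have h2 : (1:ℝ)/(m+1) ≤ 1/(N+1) :=
        one_div_le_one_div_of_le (by positivity) (by exact_mod_cast Nat.succ_le_succ hm)
      have := (hqn m).le
      have := hdδ m
      linarith
    have h2dN : 2 * d N ≤ ‖q n + q m‖ := by
      rw [hnorm] at h1
      linarith
    have hsq : ‖q n - q m‖^2 ≤ 4*(δ + 1/(N+1))^2 - 4 * d N ^ 2 := by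
      have h0n : (0:ℝ) ≤ ‖q n‖ := norm_nonneg _
      have h0m : (0:ℝ) ≤ ‖q m‖ := norm_nonneg _
      have h0s : (0:ℝ) ≤ ‖q n + q m‖ := norm_nonneg _
      have h0dN : (0:ℝ) ≤ d N := le_csInf ((hSne N).image _) (fun r ⟨p, _, hp⟩ => hp ▸ norm_nonneg p)
      nlinarith [hpar, hqnb, hqmb, h2dN]
    rw [dist_eq_norm]
    calc ‖q n - q m‖ = Real.sqrt (‖q n - q m‖^2) := (Real.sqrt_sq (norm_nonneg _)).symm
      _ ≤ b N := Real.sqrt_le_sqrt (hsq.trans (le_max_right _ _))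
  have hbtend : Tendsto b atTop (nhds 0) := by
    have hone : Tendsto (fun N : ℕ => 1/((N:ℝ)+1)) atTop (nhds 0) :=
      tendsto_one_div_add_atTop_nhds_zero_nat
    have h4 : Tendsto (fun N : ℕ => 4*(δ + 1/((N:ℝ)+1))^2 - 4 * d N ^ 2) atTop
        (nhds (4*(δ + 0)^2 - 4 * δ ^ 2)) :=
      ((((tendsto_const_nhds.add hone).pow 2).const_mul 4).sub
        ((hδtend.pow 2).const_mul 4))
    have h40 : (4*(δ + 0)^2 - 4 * δ ^ 2 : ℝ) = 0 := by ring
    rw [h40] at h4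
    have hmax : Tendsto (fun N : ℕ => max 0 (4*(δ + 1/((N:ℝ)+1))^2 - 4 * d N ^ 2)) atTop
        (nhds 0) := by
      have := (tendsto_const_nhds (x := (0:ℝ)) (f := atTop (α := ℕ))).max h4
      simpa using this
    have h5 := (Real.continuous_sqrt.tendsto 0).comp hmax
    rw [Real.sqrt_zero] at h5
    exact h5
  have hcauchy : CauchySeq q := cauchySeq_of_le_tendsto_0 b (fun n m N hn hm => hkey n m N hn hm) hbtend
  obtain ⟨qlim, hqlim⟩ := cauchySeq_tendsto_of_complete hcauchy
  haveI : Fact ((1:ℝ≥0∞) ≤ 2) := ⟨one_le_two⟩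
  have hL2tend : Tendsto (fun n => eLpNorm ((q n : α → ℂ) - (qlim : α → ℂ)) 2 μ) atTop (nhds 0) :=
    (Lp.tendsto_Lp_iff_tendsto_eLpNorm' q qlim).mp hqlim
  have hnormtend : Tendsto (fun n => ‖q n - qlim‖) atTop (nhds 0) := by
    rw [← tendsto_iff_norm_sub_tendsto_zero]
    exact hqlim
  -- a.e. convergent subsequence
  have htim : TendstoInMeasure μ (fun n => (q n : α → ℂ)) atTop (qlim : α → ℂ) :=
    tendstoInMeasure_of_tendsto_eLpNorm (p := 2) two_ne_zero
      (fun n => Lp.aestronglyMeasurable _) (Lp.aestronglyMeasurable _) hL2tend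
  obtain ⟨ns, hns_mono, hae⟩ := htim.exists_seq_tendsto_ae
  -- witnesses
  have hqS' := hqS
  choose hh hhmem hhbound hhae using fun n => hqS n
  -- the candidate minimizer
  set g : α → ℂ := fun x => h0seq 0 x + (qlim : α → ℂ) x with hg
  have hqlimint : Integrable (qlim : α → ℂ) μ :=
    memLp_one_iff_integrable.mp ((Lp.memLp qlim).mono_exponent (by norm_num))
  have hgint : Integrable g μ := (hL1 _ (h0mem 0)).add hqlimint
  have hdiffint : ∀ n, Integrable ((q n : α → ℂ) - (qlim : α → ℂ)) μ := by
    intro n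
    have : MemLp ((q n : α → ℂ) - (qlim : α → ℂ)) 2 μ := (Lp.memLp (q n)).sub (Lp.memLp qlim)
    exact memLp_one_iff_integrable.mp (this.mono_exponent (by norm_num))
  have htend : Tendsto (fun n => ∫ x, Real.log (1 + ‖hh n x - g x‖) ∂μ)
      atTop (nhds 0) := by
    refine squeeze_zero (fun n => logint_nonneg _) (fun n => ?_) hnormtend
    have heqint : ∫ x, Real.log (1 + ‖hh n x - g x‖) ∂μ
        = ∫ x, Real.log (1 + ‖((q n : α → ℂ) - (qlim : α → ℂ)) x‖) ∂μ := by
      refine integral_congr_ae ?_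
      filter_upwards [hhae n] with x hx
      have hgx : g x = h0seq 0 x + (qlim : α → ℂ) x := rfl
      have hkey2 : hh n x - g x = hh n x - h0seq 0 x - (qlim : α → ℂ) x := by
        rw [hgx]; ring
      rw [Pi.sub_apply, hx, hkey2]
    rw [heqint]
    refine (logint_le (hdiffint n)).trans ?_
    have hle : eLpNorm ((q n : α → ℂ) - (qlim : α → ℂ)) 1 μ
        ≤ eLpNorm ((q n : α → ℂ) - (qlim : α → ℂ)) 2 μ :=
      eLpNorm_le_eLpNorm_of_exponent_le (by norm_num)
        ((Lp.aestronglyMeasurable _).sub (Lp.aestronglyMeasurable _))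
    have hfin : eLpNorm ((q n : α → ℂ) - (qlim : α → ℂ)) 2 μ ≠ ⊤ := by
      rw [eLpNorm_congr_ae (Lp.coeFn_sub (q n) qlim).symm]
      exact Lp.eLpNorm_ne_top _
    have := ENNReal.toReal_mono hfin hle
    refine this.trans ?_
    rw [Lp.norm_def, eLpNorm_congr_ae (Lp.coeFn_sub (q n) qlim)]
  have hgH : g ∈ H₁ := hclosed hh g hhmem (llogMem_of_integrable hgint) hgint htend
  -- the essential bound
  have hfinal : eLpNorm (fun x => (w x : ℂ) - g x) ⊤ μ ≤ B := by
    refine top_bound_of_ae ?_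
    have hA : ∀ᵐ x ∂μ, ∀ n, (q n : α → ℂ) x = hh n x - h0seq 0 x :=
      (ae_all_iff).2 fun n => hhae n
    have hB2 : ∀ᵐ x ∂μ, ∀ n, (‖(w x : ℂ) - hh n x‖₊ : ℝ≥0∞) ≤ B + 1/(n+1) :=
      (ae_all_iff).2 fun n => ae_bound_of_top (hhbound n)
    filter_upwards [hae, hA, hB2] with x hx1 hx2 hx3
    have hconv : Tendsto (fun k => ‖(w x : ℂ) - hh (ns k) x‖) atTop
        (nhds ‖(w x : ℂ) - g x‖) := by
      have heq : ∀ k, (w x : ℂ) - hh (ns k) x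
          = ((w x : ℂ) - h0seq 0 x - (q (ns k) : α → ℂ) x) := by
        intro k
        rw [hx2 (ns k)]
        ring
      have h1 : Tendsto (fun k => (w x : ℂ) - h0seq 0 x - (q (ns k) : α → ℂ) x) atTop
          (nhds ((w x : ℂ) - h0seq 0 x - (qlim : α → ℂ) x)) :=
        tendsto_const_nhds.sub hx1
      have hgx : g x = h0seq 0 x + (qlim : α → ℂ) x := rfl
      have h2 : (w x : ℂ) - h0seq 0 x - (qlim : α → ℂ) x = (w x : ℂ) - g x := by
        rw [hgx]; ring
      rw [h2] at h1
      have hfun : (fun k => ‖(w x : ℂ) - hh (ns k) x‖)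
          = fun k => ‖(w x : ℂ) - h0seq 0 x - (q (ns k) : α → ℂ) x‖ := by
        funext k; rw [heq k]
      rw [hfun]
      exact h1.norm
    have hbk : ∀ k, ‖(w x : ℂ) - hh (ns k) x‖ ≤ B.toReal + 1/((ns k : ℝ)+1) := by
      intro k
      have h1 := hx3 (ns k)
      have hdivne : (1 : ℝ≥0∞)/(((ns k : ℕ) : ℝ≥0∞) + 1) ≠ ⊤ :=
        (ENNReal.div_lt_top one_ne_top (by simp)).ne
      have h3 := ENNReal.toReal_mono (ENNReal.add_ne_top.2 ⟨hbmo, hdivne⟩) h1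
      rw [← enorm_eq_nnnorm, ← ofReal_norm] at h3
      rw [ENNReal.toReal_ofReal (norm_nonneg _)] at h3
      refine h3.trans ?_
      rw [ENNReal.toReal_add hbmo hdivne, ENNReal.toReal_div,
        ENNReal.toReal_add (by simp) one_ne_top]
      simp
    have hblim : Tendsto (fun k => B.toReal + 1/((ns k : ℝ)+1)) atTop
        (nhds (B.toReal + 0)) := by
      refine tendsto_const_nhds.add ?_
      refine squeeze_zero (fun k => by positivity) (fun k => ?_)
        tendsto_one_div_add_atTop_nhds_zero_nat
      exact one_div_le_one_div_of_le (by positivity)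
        (by exact_mod_cast Nat.succ_le_succ hns_mono.le_apply)
    rw [add_zero] at hblim
    have hle : ‖(w x : ℂ) - g x‖ ≤ B.toReal :=
      le_of_tendsto_of_tendsto' hconv hblim hbk
    rw [← enorm_eq_nnnorm, ← ofReal_norm]
    calc ENNReal.ofReal ‖(w x : ℂ) - g x‖ ≤ ENNReal.ofReal B.toReal :=
          ENNReal.ofReal_le_ofReal hle
      _ = B := ENNReal.ofReal_toReal hbmo
  have hge : bmoNorm μ H₁ w ≤ eLpNorm (fun x => (w x : ℂ) - g x) ⊤ μ := by
    unfold bmoNorm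
    exact iInf₂_le g hgH
  rw [← hBdef] at hge
  exact ⟨g, hgH, le_antisymm hfinal hge⟩
end
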